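/- Let β > 0 and let δ: [t_*, ∞) → [0,∞) be continuous with δ not identically zero near t_*. Suppose a continuous function D satisfies D(t_*) = 0 and |D(t)| ≤ ∫_{t_*}^{t} (-δ(s) + β∫_{t_*}^{s} δ(τ) dτ) ds for all t ≥ t_*. Then, by Fubini, the right-hand side equals ∫_{t_*}^{t}(-1 + β(t - τ))δ(τ) dτ, which is negative for t ∈ (t_*, t_* + 1/β) whenever ∫_{t_*}^{t} δ > 0; hence δ ≡ 0 on [t_*, t_* + 1/β]. -/

import Mathlib

open Set intervalIntegral MeasureTheory Topology Filter

theorem stmt10 (β tstar : ℝ) (hβ : 0 < β)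
    (δ : ℝ → ℝ) (hδ_cont : ContinuousOn δ (Ici tstar))
    (hδ_nonneg : ∀ t ∈ Ici tstar, 0 ≤ δ t)
    (D : ℝ → ℝ) (hD_cont : ContinuousOn D (Ici tstar)) (hD0 : D tstar = 0)
    (hD_bound : ∀ t ∈ Ici tstar,
      |D t| ≤ ∫ s in tstar..t, (-δ s + β * ∫ τ in tstar..s, δ τ)) :
    (∀ t ∈ Ici tstar,
      (∫ s in tstar..t, (-δ s + β * ∫ τ in tstar..s, δ τ))
        = ∫ τ in tstar..t, (-1 + β * (t - τ)) * δ τ) ∧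
    (∀ t ∈ Ioo tstar (tstar + 1 / β), (0 < ∫ τ in tstar..t, δ τ) →
      (∫ τ in tstar..t, (-1 + β * (t - τ)) * δ τ) < 0) ∧
    (∀ t ∈ Icc tstar (tstar + 1 / β), δ t = 0) := by
  have h1β : 0 < 1 / β := by positivity
  set F : ℝ → ℝ := fun s => ∫ τ in tstar..s, δ τ with hF
  have hτδ_cont : ContinuousOn (fun τ => τ * δ τ) (Ici tstar) :=
    continuousOn_id.mul hδ_cont
  -- integrability helper
  have hIg : ∀ (g : ℝ → ℝ), ContinuousOn g (Ici tstar) → ∀ {t : ℝ}, tstar ≤ t →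
      IntervalIntegrable g volume tstar t := by
    intro g hg t ht
    exact (hg.mono (by rw [uIcc_of_le ht]; exact Icc_subset_Ici_self)).intervalIntegrable
  -- FTC helper : right derivative of primitive
  have FTC : ∀ (g : ℝ → ℝ), ContinuousOn g (Ici tstar) → ∀ x, tstar ≤ x →
      HasDerivWithinAt (fun u => ∫ τ in tstar..u, g τ) (g x) (Ici x) x := by
    intro g hg x hx
    have hsub : Ioi x ⊆ Ici tstar := fun y hy => le_trans hx hy.le
    have hmeas : StronglyMeasurableAtFilter g (𝓝[>] x) volume :=
      AEStronglyMeasurable.stronglyMeasurableAtFilter_of_mem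
        (hg.aestronglyMeasurable measurableSet_Ici)
        (Filter.mem_of_superset self_mem_nhdsWithin hsub)
    exact intervalIntegral.integral_hasDerivWithinAt_right (hIg g hg hx) hmeas
      ((hg x hx).mono hsub)
  -- continuity of the primitive F on Ici tstar
  have hF_cont : ContinuousOn F (Ici tstar) := by
    intro x hx
    have h1 : ContinuousOn F (uIcc tstar (x + 1)) :=
      continuousOn_primitive_interval' (hIg δ hδ_cont (by linarith [hx.out])) left_mem_uIcc
    rw [uIcc_of_le (by linarith [hx.out])] at h1
    exact (h1 x ⟨hx, by linarith⟩).mono_of_mem_nhdsWithin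
      (Filter.inter_mem self_mem_nhdsWithin
        (mem_nhdsWithin_of_mem_nhds (Iic_mem_nhds (lt_add_one x))))
  -- key Fubini-type identity
  have key : ∀ t, tstar ≤ t →
      (∫ s in tstar..t, F s)
        = t * F t - ∫ τ in tstar..t, τ * δ τ := by
    intro t ht
    have hgoal := eq_of_has_deriv_right_eq (f := fun u => ∫ s in tstar..u, F s)
      (g := fun y => y * F y - ∫ τ in tstar..y, τ * δ τ) (f' := F) (a := tstar) (b := t)
      (fun x hx => FTC F hF_cont x hx.1)
      (fun x hx => by
        have h1 : HasDerivWithinAt (fun y => y * F y) (1 * F x + x * δ x) (Ici x) x :=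
          (hasDerivWithinAt_id x (Ici x)).mul (FTC δ hδ_cont x hx.1)
        have h2 := FTC (fun τ => τ * δ τ) hτδ_cont x hx.1
        have h3 := h1.sub h2
        exact h3.congr_deriv (by ring))
      (by
        have := continuousOn_primitive_interval' (hIg F hF_cont ht) left_mem_uIcc
        rwa [uIcc_of_le ht] at this)
      (by
        refine ContinuousOn.sub (continuousOn_id.mul
          ((hF_cont.mono Icc_subset_Ici_self))) ?_
        have := continuousOn_primitive_interval'
          (hIg (fun τ => τ * δ τ) hτδ_cont ht) left_mem_uIcc
        rwa [uIcc_of_le ht] at this)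
      (by simp [hF])
    exact hgoal t (right_mem_Icc.2 ht)
  -- Part 1
  have part1 : ∀ t ∈ Ici tstar,
      (∫ s in tstar..t, (-δ s + β * ∫ τ in tstar..s, δ τ))
        = ∫ τ in tstar..t, (-1 + β * (t - τ)) * δ τ := by
    intro t ht
    have hδI := hIg δ hδ_cont ht.out
    have hτδI := hIg (fun τ => τ * δ τ) hτδ_cont ht.out
    have hFI := hIg F hF_cont ht.out
    have hnegI : IntervalIntegrable (fun s => -δ s) volume tstar t := hδI.neg
    have hβFI : IntervalIntegrable (fun s => β * F s) volume tstar t := hFI.const_mul β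
    simp only [show ∀ s : ℝ, (∫ τ in tstar..s, δ τ) = F s from fun _ => rfl]
    rw [intervalIntegral.integral_add hnegI hβFI,
      intervalIntegral.integral_neg, intervalIntegral.integral_const_mul, key t ht.out]
    have hcongr : ∀ τ, (-1 + β * (t - τ)) * δ τ = -δ τ + β * (t * δ τ - τ * δ τ) :=
      fun τ => by ring
    simp_rw [hcongr]
    have htδI : IntervalIntegrable (fun τ => t * δ τ) volume tstar t := hδI.const_mul t
    have h2I : IntervalIntegrable (fun τ => β * (t * δ τ - τ * δ τ)) volume tstar t :=
      (htδI.sub hτδI).const_mul β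
    rw [intervalIntegral.integral_add hnegI h2I,
      intervalIntegral.integral_neg, intervalIntegral.integral_const_mul,
      intervalIntegral.integral_sub htδI hτδI,
      intervalIntegral.integral_const_mul]
  -- Part 2
  have part2 : ∀ t ∈ Ioo tstar (tstar + 1 / β), (0 < ∫ τ in tstar..t, δ τ) →
      (∫ τ in tstar..t, (-1 + β * (t - τ)) * δ τ) < 0 := by
    intro t ht hpos
    have ht1 : tstar ≤ t := ht.1.le
    have hc : -1 + β * (t - tstar) < 0 := by
      have h2 : β * (t - tstar) < β * (1 / β) :=
        mul_lt_mul_of_pos_left (by linarith [ht.2]) hβ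
      rw [mul_one_div_cancel hβ.ne'] at h2
      linarith
    have hint1 : IntervalIntegrable (fun τ => (-1 + β * (t - τ)) * δ τ) volume tstar t :=
      hIg _ (((continuous_const.add (continuous_const.mul
        (continuous_const.sub continuous_id))).continuousOn).mul hδ_cont) ht1
    have hint2 : IntervalIntegrable (fun τ => (-1 + β * (t - tstar)) * δ τ) volume tstar t :=
      (hIg δ hδ_cont ht1).const_mul _
    have hmono : (∫ τ in tstar..t, (-1 + β * (t - τ)) * δ τ)
        ≤ ∫ τ in tstar..t, (-1 + β * (t - tstar)) * δ τ := by
      apply intervalIntegral.integral_mono_on ht1 hint1 hint2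
      intro x hx
      apply mul_le_mul_of_nonneg_right _ (hδ_nonneg x hx.1)
      have : β * (t - x) ≤ β * (t - tstar) :=
        mul_le_mul_of_nonneg_left (by linarith [hx.1]) hβ.le
      linarith
    calc (∫ τ in tstar..t, (-1 + β * (t - τ)) * δ τ)
        ≤ ∫ τ in tstar..t, (-1 + β * (t - tstar)) * δ τ := hmono
      _ = (-1 + β * (t - tstar)) * ∫ τ in tstar..t, δ τ :=
          intervalIntegral.integral_const_mul _ _
      _ < 0 := mul_neg_of_neg_of_pos hc hpos
  refine ⟨part1, part2, ?_⟩
  -- Part 3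
  -- Step A: the primitive F vanishes on the open interval
  have stepA : ∀ t ∈ Ioo tstar (tstar + 1 / β), F t = 0 := by
    intro t ht
    have ht1 : tstar ≤ t := ht.1.le
    have hFnn : 0 ≤ F t :=
      intervalIntegral.integral_nonneg ht1 (fun x hx => hδ_nonneg x hx.1)
    rcases lt_or_eq_of_le hFnn with hlt | heq
    · exfalso
      have hb := hD_bound t ht1
      rw [part1 t ht1] at hb
      have := part2 t ht hlt
      have := abs_nonneg (D t)
      linarith
    · exact heq.symm
  -- Step B: δ vanishes on the open interval
  have stepB : ∀ t ∈ Ioo tstar (tstar + 1 / β), δ t = 0 := by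
    intro t ht
    have hIci : Ici tstar ∈ nhds t := Ici_mem_nhds ht.1
    have hcontAt : ContinuousAt δ t := hδ_cont.continuousAt hIci
    have hd1 : HasDerivAt F (δ t) t := by
      refine intervalIntegral.integral_hasDerivAt_right (hIg δ hδ_cont ht.1.le) ?_ hcontAt
      exact AEStronglyMeasurable.stronglyMeasurableAtFilter_of_mem
        (hδ_cont.aestronglyMeasurable measurableSet_Ici) hIci
    have hd2 : HasDerivAt F 0 t := by
      have hev : F =ᶠ[nhds t] (fun _ => (0 : ℝ)) :=
        Filter.eventuallyEq_of_mem (isOpen_Ioo.mem_nhds ht) stepA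
      exact (hasDerivAt_const t (0 : ℝ)).congr_of_eventuallyEq hev
    exact hd1.unique hd2
  intro t ht
  rcases eq_or_lt_of_le ht.1 with h0 | h0
  · -- t = tstar : right limit
    subst h0
    have htend : Filter.Tendsto δ (nhdsWithin tstar (Ioi tstar)) (nhds (δ tstar)) :=
      (hδ_cont tstar self_mem_Ici).mono Ioi_subset_Ici_self
    have htend0 : Filter.Tendsto δ (nhdsWithin tstar (Ioi tstar)) (nhds 0) := by
      refine Filter.Tendsto.congr' ?_ tendsto_const_nhds
      filter_upwards [Ioo_mem_nhdsGT_of_mem (left_mem_Ico.2 (by linarith : tstar < tstar + 1 / β))] with x hx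
      exact (stepB x hx).symm
    exact tendsto_nhds_unique htend htend0
  · rcases lt_or_eq_of_le ht.2 with h1 | h1
    · exact stepB t ⟨h0, h1⟩
    · -- t = tstar + 1/β : left limit
      have hcontAt : ContinuousAt δ t := hδ_cont.continuousAt (Ici_mem_nhds h0)
      have htend : Filter.Tendsto δ (nhdsWithin t (Iio t)) (nhds (δ t)) :=
        hcontAt.continuousWithinAt
      have htend0 : Filter.Tendsto δ (nhdsWithin t (Iio t)) (nhds 0) := by
        refine Filter.Tendsto.congr' ?_ tendsto_const_nhds
        filter_upwards [Ioo_mem_nhdsLT_of_mem (⟨h0, ht.2⟩ : t ∈ Ioc tstar (tstar + 1 / β))] with x hx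
        exact (stepB x hx).symm
      have : δ t = 0 := tendsto_nhds_unique htend htend0
      exact this
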